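/- The lattice associator scalars satisfy the pentagon identity: for all representatives w, x, y, z of the form a/√(2N) with a ∈ {0,…,2N−1}, one has (−1)^{w·k(x,y)} · (−1)^{w·k(x⊕y, z)} · (−1)^{x·k(y,z)} = (−1)^{(w⊕x)·k(y,z)} · (−1)^{w·k(x, y⊕z)}, where x⊕y := x+y−k(x,y) and all the exponents w·k(x,y), w·k(x⊕y,z), x·k(y,z), (w⊕x)·k(y,z), w·k(x,y⊕z) are integers. -/

import Mathlib

noncomputable section

/-- `√(2N)`, the generator of the even lattice `L = √(2N)ℤ`. -/
def latQ (N : ℕ) : ℝ := Real.sqrt (2 * N)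

/-- The 2-cocycle `k(x,y) = √(2N)` if `x + y ≥ √(2N)`, else `0`. -/
def latk (N : ℕ) (x y : ℝ) : ℝ := if latQ N ≤ x + y then latQ N else 0

/-- The induced addition of representatives: `x ⊕ y := x + y − k(x,y)`. -/
def latAdd (N : ℕ) (x y : ℝ) : ℝ := x + y - latk N x y

/-- the lattice associator scalars satisfy the pentagon identity:
for representatives `w, x, y, z` of the form `a/√(2N)` with `a ∈ {0,…,2N−1}`,
`(−1)^{w·k(x,y)}·(−1)^{w·k(x⊕y,z)}·(−1)^{x·k(y,z)}
  = (−1)^{(w⊕x)·k(y,z)}·(−1)^{w·k(x,y⊕z)}`,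
where all five exponents are integers. -/
theorem lattice_pentagon_identity (N : ℕ) (hN : 0 < N) (aw ax ay az : ℕ)
    (hw : aw < 2 * N) (hx : ax < 2 * N) (hy : ay < 2 * N) (hz : az < 2 * N)
    (w x y z : ℝ) (hw' : w = aw / latQ N) (hx' : x = ax / latQ N)
    (hy' : y = ay / latQ N) (hz' : z = az / latQ N) :
    -- all the exponents are integers ...
    (∃ e : ℤ, (e : ℝ) = w * latk N x y) ∧
    (∃ e : ℤ, (e : ℝ) = w * latk N (latAdd N x y) z) ∧
    (∃ e : ℤ, (e : ℝ) = x * latk N y z) ∧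
    (∃ e : ℤ, (e : ℝ) = (latAdd N w x) * latk N y z) ∧
    (∃ e : ℤ, (e : ℝ) = w * latk N x (latAdd N y z)) ∧
    -- ... and the corresponding signs satisfy the pentagon identity
    (∀ e₁ e₂ e₃ e₄ e₅ : ℤ,
      (e₁ : ℝ) = w * latk N x y →
      (e₂ : ℝ) = w * latk N (latAdd N x y) z →
      (e₃ : ℝ) = x * latk N y z →
      (e₄ : ℝ) = (latAdd N w x) * latk N y z →
      (e₅ : ℝ) = w * latk N x (latAdd N y z) →
      (-1 : ℝ) ^ e₁ * (-1 : ℝ) ^ e₂ * (-1 : ℝ) ^ e₃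
        = (-1 : ℝ) ^ e₄ * (-1 : ℝ) ^ e₅) := by
  have hQpos : (0:ℝ) < latQ N := Real.sqrt_pos.mpr (by positivity)
  have hQ0 : latQ N ≠ 0 := ne_of_gt hQpos
  have hQQ : latQ N * latQ N = 2*N := Real.mul_self_sqrt (by positivity)
  have hk : ∀ b c : ℕ, latk N ((b:ℝ)/latQ N) ((c:ℝ)/latQ N)
      = if 2*N ≤ b+c then latQ N else 0 := by
    intro b c
    have hiff : latQ N ≤ (b:ℝ)/latQ N + (c:ℝ)/latQ N ↔ 2*N ≤ b+c := by
      rw [← add_div, le_div_iff₀ hQpos, hQQ,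
        show ((2:ℝ)*N : ℝ) = ((2*N : ℕ):ℝ) by push_cast; ring,
        show ((b:ℝ)+(c:ℝ)) = ((b+c : ℕ):ℝ) by push_cast; ring]
      exact Nat.cast_le
    unfold latk
    rw [if_congr hiff rfl rfl]
  have hmul : ∀ a b c : ℕ, (a:ℝ)/latQ N * latk N ((b:ℝ)/latQ N) ((c:ℝ)/latQ N)
      = if 2*N ≤ b+c then (a:ℝ) else 0 := by
    intro a b c
    rw [hk]
    split_ifs with h
    · field_simp
    · simp
  have hadd : ∀ b c : ℕ, latAdd N ((b:ℝ)/latQ N) ((c:ℝ)/latQ N)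
      = ((if 2*N ≤ b+c then b+c-2*N else b+c : ℕ):ℝ)/latQ N := by
    intro b c
    unfold latAdd
    rw [hk]
    split_ifs with h
    · have : ((b+c-2*N : ℕ):ℝ) = (b:ℝ)+(c:ℝ)-2*N := by push_cast [h]; ring
      rw [this]
      field_simp
      linear_combination -hQQ
    · simp [← add_div]
  subst hw' hx' hy' hz'
  set xy : ℕ := if 2*N ≤ ax+ay then ax+ay-2*N else ax+ay with hxy
  set yz : ℕ := if 2*N ≤ ay+az then ay+az-2*N else ay+az with hyz
  set wx : ℕ := if 2*N ≤ aw+ax then aw+ax-2*N else aw+ax with hwx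
  have castif : ∀ (p : Prop) [Decidable p] (a : ℕ),
      (((if p then (a:ℤ) else 0) : ℤ) : ℝ) = if p then (a:ℝ) else 0 := by
    intro p _ a; split_ifs <;> simp
  have h1 : (aw:ℝ)/latQ N * latk N ((ax:ℝ)/latQ N) ((ay:ℝ)/latQ N)
      = (((if 2*N ≤ ax+ay then (aw:ℤ) else 0) : ℤ) : ℝ) := by
    rw [hmul, castif]
  have h2 : (aw:ℝ)/latQ N * latk N (latAdd N ((ax:ℝ)/latQ N) ((ay:ℝ)/latQ N)) ((az:ℝ)/latQ N)
      = (((if 2*N ≤ xy+az then (aw:ℤ) else 0) : ℤ) : ℝ) := by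
    rw [hadd, hmul, castif]
  have h3 : (ax:ℝ)/latQ N * latk N ((ay:ℝ)/latQ N) ((az:ℝ)/latQ N)
      = (((if 2*N ≤ ay+az then (ax:ℤ) else 0) : ℤ) : ℝ) := by
    rw [hmul, castif]
  have h4 : (latAdd N ((aw:ℝ)/latQ N) ((ax:ℝ)/latQ N)) * latk N ((ay:ℝ)/latQ N) ((az:ℝ)/latQ N)
      = (((if 2*N ≤ ay+az then (wx:ℤ) else 0) : ℤ) : ℝ) := by
    rw [hadd, hmul, castif]
  have h5 : (aw:ℝ)/latQ N * latk N ((ax:ℝ)/latQ N) (latAdd N ((ay:ℝ)/latQ N) ((az:ℝ)/latQ N))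
      = (((if 2*N ≤ ax+yz then (aw:ℤ) else 0) : ℤ) : ℝ) := by
    rw [hadd, hmul, castif]
  refine ⟨⟨_, h1.symm⟩, ⟨_, h2.symm⟩, ⟨_, h3.symm⟩, ⟨_, h4.symm⟩, ⟨_, h5.symm⟩, ?_⟩
  intro e₁ e₂ e₃ e₄ e₅ he₁ he₂ he₃ he₄ he₅
  have g1 : e₁ = (if 2*N ≤ ax+ay then (aw:ℤ) else 0) := by
    exact_mod_cast he₁.trans h1
  have g2 : e₂ = (if 2*N ≤ xy+az then (aw:ℤ) else 0) := by
    exact_mod_cast he₂.trans h2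
  have g3 : e₃ = (if 2*N ≤ ay+az then (ax:ℤ) else 0) := by
    exact_mod_cast he₃.trans h3
  have g4 : e₄ = (if 2*N ≤ ay+az then (wx:ℤ) else 0) := by
    exact_mod_cast he₄.trans h4
  have g5 : e₅ = (if 2*N ≤ ax+yz then (aw:ℤ) else 0) := by
    exact_mod_cast he₅.trans h5
  have key : (e₁ + e₂ + e₃ - e₄ - e₅) % 2 = 0 := by
    rw [g1, g2, g3, g4, g5, hxy, hyz, hwx]
    by_cases hB : 2*N ≤ ax+ay <;> by_cases hC : 2*N ≤ ay+az <;>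
      by_cases hA : 2*N ≤ aw+ax <;>
      simp only [hB, hC, hA, if_true, if_false, ite_true, ite_false] <;>
      split_ifs <;> omega
  obtain ⟨m, hm⟩ : ∃ m : ℤ, e₁ + e₂ + e₃ = e₄ + e₅ + 2*m :=
    ⟨(e₁ + e₂ + e₃ - e₄ - e₅)/2, by omega⟩
  have hne : (-1:ℝ) ≠ 0 := by norm_num
  rw [← zpow_add₀ hne, ← zpow_add₀ hne, hm, zpow_add₀ hne, zpow_add₀ hne, zpow_mul]
  norm_num

end
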